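/- Let σ₁₁, σ₁₂, σ₂₁, σ₂₂, b₁₁, b₂₁, b₂₂, κ₁, κ₂, θ ∈ ℝ and s ∈ [0,∞). For μ ∈ ℝ, say that a differentiable function F = (F₁,F₂) : [0,∞) → ℂ² solves S(μ) if F₁′(t) = (σ₁₁²/2)·F₁(t)² − b₁₁·F₁(t) − b₂₁·F₂(t) − i·μ·κ₁·e^{−θt} − (μ²·σ₂₁²/2)·e^{−2θt} and F₂′(t) = (σ₁₂²/2)·F₂(t)² − b₂₂·F₂(t) − i·μ·κ₂·e^{−θt} − (μ²·σ₂₂²/2)·e^{−2θt} for all t ≥ 0. If F solves S(μ) and G solves S(μ·e^{−θ s}) with G(0) = F(s), then G(t) = F(t + s) for all t ≥ 0. -/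

import Mathlib

open MeasureTheory Filter Real Complex

lemma zero_of_gronwall_aux {T K : ℝ} {d d' : ℝ → ℂ}
    (hd : ContinuousOn d (Set.Icc 0 T))
    (hd' : ∀ x ∈ Set.Ico 0 T, HasDerivWithinAt d (d' x) (Set.Ici x) x)
    (h0 : d 0 = 0)
    (bound : ∀ x ∈ Set.Ico 0 T, ‖d' x‖ ≤ K * ‖d x‖) :
    ∀ x ∈ Set.Icc 0 T, d x = 0 := by
  intro x hx
  have h := norm_le_gronwallBound_of_norm_deriv_right_le (δ := 0) (ε := 0) (K := K)
    hd hd' (by simp [h0]) (fun y hy => by simpa using bound y hy) x hx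
  rw [gronwallBound] at h
  split_ifs at h <;>
  · simp only [zero_mul, zero_add, mul_zero, zero_div, sub_zero, add_zero] at h
    exact norm_le_zero_iff.mp (by simpa using h)

/-- A pair `(F₁,F₂)` of differentiable complex-valued functions on `[0,∞)` solves the
Riccati system `S(μ)` (system (EDK)) of the double Heston model. -/
def SolvesRiccatiSystem (σ11 σ12 σ21 σ22 b11 b21 b22 κ1 κ2 θ μ : ℝ)
    (F1 F2 : ℝ → ℂ) : Prop :=
  ∀ t : ℝ, 0 ≤ t →
    HasDerivAt F1
      ((σ11 ^ 2 / 2 : ℂ) * F1 t ^ 2 - (b11 : ℂ) * F1 t - (b21 : ℂ) * F2 t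
        - Complex.I * (μ : ℂ) * (κ1 : ℂ) * (Real.exp (-θ * t) : ℂ)
        - ((μ ^ 2 * σ21 ^ 2 / 2 : ℝ) : ℂ) * (Real.exp (-2 * θ * t) : ℂ)) t ∧
    HasDerivAt F2
      ((σ12 ^ 2 / 2 : ℂ) * F2 t ^ 2 - (b22 : ℂ) * F2 t
        - Complex.I * (μ : ℂ) * (κ2 : ℂ) * (Real.exp (-θ * t) : ℂ)
        - ((μ ^ 2 * σ22 ^ 2 / 2 : ℝ) : ℂ) * (Real.exp (-2 * θ * t) : ℂ)) t

theorem riccati_flow_property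
    (σ11 σ12 σ21 σ22 b11 b21 b22 κ1 κ2 θ : ℝ) (s : ℝ) (hs : 0 ≤ s) (μ : ℝ)
    (F1 F2 G1 G2 : ℝ → ℂ)
    (hF : SolvesRiccatiSystem σ11 σ12 σ21 σ22 b11 b21 b22 κ1 κ2 θ μ F1 F2)
    (hG : SolvesRiccatiSystem σ11 σ12 σ21 σ22 b11 b21 b22 κ1 κ2 θ
      (μ * Real.exp (-θ * s)) G1 G2)
    (hG10 : G1 0 = F1 s) (hG20 : G2 0 = F2 s) :
    ∀ t, 0 ≤ t → G1 t = F1 (t + s) ∧ G2 t = F2 (t + s) := by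
  set H1 : ℝ → ℂ := fun u => F1 (u + s) with hH1def
  set H2 : ℝ → ℂ := fun u => F2 (u + s) with hH2def
  -- H = F(· + s) solves the system with parameter μ * exp (-θ s)
  have hH : SolvesRiccatiSystem σ11 σ12 σ21 σ22 b11 b21 b22 κ1 κ2 θ
      (μ * Real.exp (-θ * s)) H1 H2 := by
    intro u hu
    have hus : 0 ≤ u + s := by linarith
    obtain ⟨h1, h2⟩ := hF (u + s) hus
    have hadd : HasDerivAt (fun x : ℝ => x + s) 1 u := (hasDerivAt_id u).add_const s
    have e1 : Real.exp (-θ * (u + s)) = Real.exp (-θ * u) * Real.exp (-θ * s) := by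
      rw [← Real.exp_add]; ring_nf
    have e2 : Real.exp (-2 * θ * (u + s))
        = Real.exp (-2 * θ * u) * (Real.exp (-θ * s) * Real.exp (-θ * s)) := by
      rw [← Real.exp_add, ← Real.exp_add]; ring_nf
    constructor
    · have := h1.comp_add_const u s
      refine this.congr_deriv ?_
      push_cast [e1, e2]; ring
    · have := h2.comp_add_const u s
      refine this.congr_deriv ?_
      push_cast [e1, e2]; ring
  intro t ht
  -- continuity of everything on [0, t]
  have cG1 : ContinuousOn G1 (Set.Icc 0 t) :=
    fun u hu => ((hG u hu.1).1.continuousAt).continuousWithinAt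
  have cG2 : ContinuousOn G2 (Set.Icc 0 t) :=
    fun u hu => ((hG u hu.1).2.continuousAt).continuousWithinAt
  have cH1 : ContinuousOn H1 (Set.Icc 0 t) :=
    fun u hu => ((hH u hu.1).1.continuousAt).continuousWithinAt
  have cH2 : ContinuousOn H2 (Set.Icc 0 t) :=
    fun u hu => ((hH u hu.1).2.continuousAt).continuousWithinAt
  -- bounds on [0, t]
  obtain ⟨C1, hC1⟩ := isCompact_Icc.exists_bound_of_continuousOn (cG1.add cH1)
  obtain ⟨C2, hC2⟩ := isCompact_Icc.exists_bound_of_continuousOn (cG2.add cH2)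
  have hσ12 : ‖(σ12 ^ 2 / 2 : ℂ)‖ = σ12 ^ 2 / 2 := by
    rw [norm_div, norm_pow, Complex.norm_real]
    simp [_root_.sq_abs]
  have hσ11 : ‖(σ11 ^ 2 / 2 : ℂ)‖ = σ11 ^ 2 / 2 := by
    rw [norm_div, norm_pow, Complex.norm_real]
    simp [_root_.sq_abs]
  -- step 1: G2 = H2 on [0, t]
  have key2 : ∀ x ∈ Set.Icc 0 t, G2 x - H2 x = 0 := by
    apply zero_of_gronwall_aux
      (d' := fun u => ((σ12 ^ 2 / 2 : ℂ) * (G2 u + H2 u) - (b22 : ℂ)) * (G2 u - H2 u))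
      (K := σ12 ^ 2 / 2 * C2 + |b22|) (cG2.sub cH2)
    · intro u hu
      have hd : HasDerivAt (fun x => G2 x - H2 x)
          (((σ12 ^ 2 / 2 : ℂ) * (G2 u + H2 u) - (b22 : ℂ)) * (G2 u - H2 u)) u := by
        have := (hG u hu.1).2.sub (hH u hu.1).2
        refine this.congr_deriv ?_; ring
      exact hd.hasDerivWithinAt
    · simp [hG20, H2]
    · intro u hu
      rw [norm_mul]
      refine mul_le_mul_of_nonneg_right ?_ (norm_nonneg _)
      calc ‖(σ12 ^ 2 / 2 : ℂ) * (G2 u + H2 u) - (b22 : ℂ)‖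
          ≤ ‖(σ12 ^ 2 / 2 : ℂ) * (G2 u + H2 u)‖ + ‖(b22 : ℂ)‖ := norm_sub_le _ _
        _ ≤ σ12 ^ 2 / 2 * C2 + |b22| := by
            rw [norm_mul, hσ12, Complex.norm_real, Real.norm_eq_abs]
            gcongr
            exact hC2 u (Set.mem_Icc_of_Ico hu)
  -- step 2: G1 = H1 on [0, t]
  have key1 : ∀ x ∈ Set.Icc 0 t, G1 x - H1 x = 0 := by
    apply zero_of_gronwall_aux
      (d' := fun u => ((σ11 ^ 2 / 2 : ℂ) * (G1 u + H1 u) - (b11 : ℂ)) * (G1 u - H1 u))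
      (K := σ11 ^ 2 / 2 * C1 + |b11|) (cG1.sub cH1)
    · intro u hu
      have h2 : G2 u = H2 u := by
        have := key2 u (Set.mem_Icc_of_Ico hu)
        linear_combination this
      have hd : HasDerivAt (fun x => G1 x - H1 x)
          (((σ11 ^ 2 / 2 : ℂ) * (G1 u + H1 u) - (b11 : ℂ)) * (G1 u - H1 u)) u := by
        have := (hG u hu.1).1.sub (hH u hu.1).1
        refine this.congr_deriv ?_
        rw [h2]; ring
      exact hd.hasDerivWithinAt
    · simp [hG10, H1]
    · intro u hu
      rw [norm_mul]
      refine mul_le_mul_of_nonneg_right ?_ (norm_nonneg _)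
      calc ‖(σ11 ^ 2 / 2 : ℂ) * (G1 u + H1 u) - (b11 : ℂ)‖
          ≤ ‖(σ11 ^ 2 / 2 : ℂ) * (G1 u + H1 u)‖ + ‖(b11 : ℂ)‖ := norm_sub_le _ _
        _ ≤ σ11 ^ 2 / 2 * C1 + |b11| := by
            rw [norm_mul, hσ11, Complex.norm_real, Real.norm_eq_abs]
            gcongr
            exact hC1 u (Set.mem_Icc_of_Ico hu)
  have ht' : t ∈ Set.Icc (0 : ℝ) t := Set.mem_Icc.mpr ⟨ht, le_refl t⟩
  exact ⟨by linear_combination key1 t ht', by linear_combination key2 t ht'⟩
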